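/- Let n ≥ 3 and let N ≥ 1 be an integer with the property that for all n-th-power-free integers a, a' with a ≡ a' (mod N) one has d_p(a) = d_p(a') for every prime p dividing n. Then M(n) = n·rad(n) divides N. In other words, n·rad(n) is the minimal period of the local data (d_p)_{p | n}. -/

import Mathlib

/-- An integer `a` is `n`-th-power-free if no prime `q` satisfies `q^n ∣ a`
(in particular `a ≠ 0` when `n ≥ 1`). -/
def NthPowerFree (n : ℕ) (a : ℤ) : Prop :=
  ∀ q : ℕ, q.Prime → ¬ ((q : ℤ) ^ n ∣ a)

/-- The radical of `n`: the product of the distinct primes dividing `n`. -/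
def radical (n : ℕ) : ℕ := ∏ p ∈ n.primeFactors, p

/-- The local invariant `d_p(a)`: for a prime `p` with `v_p(n) = e ≥ 1`,
`d_p(a) = min{v_p(a^(p−1) − 1) − 1, e}` if `p ∤ a` (with the convention `v_p(0) = ∞`,
so that the minimum equals `e` when `a^(p−1) = 1`), and `d_p(a) = −1` if `p ∣ a`. -/
noncomputable def dLocal (p e : ℕ) (a : ℤ) : ℤ :=
  if (p : ℤ) ∣ a then -1
  else if a ^ (p - 1) - 1 = 0 then (e : ℤ)
  else min ((padicValInt p (a ^ (p - 1) - 1) : ℤ) - 1) (e : ℤ)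

lemma nthPowerFree_one {n : ℕ} (hn : 1 ≤ n) : NthPowerFree n 1 := by
  intro q hq hdvd
  have h1 : (q:ℤ)^n ≤ 1 := Int.le_of_dvd one_pos hdvd
  have h2 : (2:ℤ) ≤ (q:ℤ) := by exact_mod_cast hq.two_le
  have h3 : (2:ℤ)^n ≤ (q:ℤ)^n := pow_le_pow_left₀ (by norm_num) h2 n
  have h4 : (2:ℤ)^1 ≤ (2:ℤ)^n := pow_le_pow_right₀ (by norm_num) hn
  simp at h4; linarith

lemma nthPowerFree_of_squarefree {n : ℕ} (hn : 2 ≤ n) {a : ℤ} (ha : Squarefree a) :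
    NthPowerFree n a := by
  intro q hq hdvd
  have h2 : (q:ℤ)*(q:ℤ) ∣ a := by
    have : (q:ℤ)^2 ∣ (q:ℤ)^n := pow_dvd_pow _ hn
    have := this.trans hdvd
    rwa [sq] at this
  have : Prime (q:ℤ) := Nat.prime_iff_prime_int.mp hq
  exact this.not_unit (ha _ h2)

lemma not_cast_prime_dvd_one {p : ℕ} (hp : p.Prime) : ¬ (p:ℤ) ∣ 1 := by
  intro h
  have h' : p ∣ 1 := by exact_mod_cast h
  have := hp.two_le
  have := Nat.eq_one_of_dvd_one h'
  omega

lemma dLocal_one (p e : ℕ) (hp : p.Prime) : dLocal p e 1 = e := by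
  unfold dLocal
  rw [if_neg (not_cast_prime_dvd_one hp), if_pos (by simp)]

lemma dLocal_dvd (p e : ℕ) {a : ℤ} (h : (p:ℤ) ∣ a) : dLocal p e a = -1 := if_pos h

lemma dLocal_val (p : ℕ) (hp : p.Prime) (e f : ℕ) (hf1 : 1 ≤ f) (hfe : f ≤ e)
    {a : ℤ} (ha2 : 2 ≤ a)
    (h1 : (p:ℤ)^f ∣ a - 1) (h2 : ¬ (p:ℤ)^(f+1) ∣ a - 1) :
    dLocal p e a = (f:ℤ) - 1 := by
  haveI : Fact p.Prime := ⟨hp⟩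
  have hpd : (p:ℤ) ∣ a - 1 := (dvd_pow_self (p:ℤ) (by omega : f ≠ 0)).trans h1
  have hpa : ¬ (p:ℤ) ∣ a := by
    intro h
    exact not_cast_prime_dvd_one hp (by simpa using dvd_sub h hpd)
  have hp1 : 1 ≤ p - 1 := by have := hp.two_le; omega
  have hgt : 1 < a ^ (p-1) := one_lt_pow₀ (by linarith) (by omega)
  have hne : a ^ (p-1) - 1 ≠ 0 := by intro h; omega
  set S : ℤ := ∑ i ∈ Finset.range (p-1), a ^ i with hS
  have hfac : a ^ (p-1) - 1 = (a - 1) * S := by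
    rw [mul_comm, hS, geom_sum_mul]
  have hpS : ¬ (p:ℤ) ∣ S := by
    intro h
    have hz : ((S : ℤ) : ZMod p) = 0 := by
      exact_mod_cast (ZMod.intCast_zmod_eq_zero_iff_dvd S p).mpr (by exact_mod_cast h)
    have ha1 : ((a : ℤ) : ZMod p) = 1 := by
      have : ((a - 1 : ℤ) : ZMod p) = 0 :=
        (ZMod.intCast_zmod_eq_zero_iff_dvd _ p).mpr (by exact_mod_cast hpd)
      push_cast at this
      linear_combination this
    haveI : Fact (1 < p) := ⟨hp.one_lt⟩
    rw [hS] at hz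
    push_cast at hz
    rw [ha1] at hz
    simp at hz
    have : ((p - 1 : ℕ) : ZMod p) = -1 := by
      have : ((p - 1 : ℕ) : ZMod p) = (p : ZMod p) - 1 := by
        push_cast [Nat.cast_sub hp.one_le]; ring
      rw [this, ZMod.natCast_self]; ring
    rw [this] at hz
    exact (neg_ne_zero.mpr one_ne_zero) hz
  have hx0 : a - 1 ≠ 0 := by omega
  have hS0 : S ≠ 0 := fun h => hpS (h ▸ dvd_zero _)
  have hvx : padicValInt p (a-1) = f := by
    have hle : f ≤ padicValInt p (a-1) := ((padicValInt_dvd_iff f (a-1)).mp h1).resolve_left hx0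
    have hlt : ¬ (f+1 ≤ padicValInt p (a-1)) := fun h =>
      h2 ((padicValInt_dvd_iff (f+1) (a-1)).mpr (Or.inr h))
    omega
  have hvS : padicValInt p S = 0 := by
    by_contra h
    apply hpS
    have : (p:ℤ)^1 ∣ S := (padicValInt_dvd_iff 1 S).mpr (Or.inr (by omega))
    simpa using this
  have hval : padicValInt p (a^(p-1) - 1) = f := by
    rw [hfac, padicValInt.mul hx0 hS0, hvx, hvS]; omega
  unfold dLocal
  rw [if_neg hpa, if_neg hne, hval]
  have : (f:ℤ) - 1 ≤ (e:ℤ) := by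
    have : (f:ℤ) ≤ e := by exact_mod_cast hfe
    omega
  exact min_eq_left this

lemma key_pow_dvd (n : ℕ) (hn : 3 ≤ n) (N : ℕ) (hN : 1 ≤ N)
    (hper : ∀ a a' : ℤ, NthPowerFree n a → NthPowerFree n a' → a ≡ a' [ZMOD (N : ℤ)] →
      ∀ p : ℕ, p.Prime → p ∣ n →
        dLocal p (padicValNat p n) a = dLocal p (padicValNat p n) a') :
    ∀ p : ℕ, p.Prime → p ∣ n → p ^ (padicValNat p n + 1) ∣ N := by
  intro p hp hpn
  by_contra hcon
  haveI : Fact p.Prime := ⟨hp⟩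
  have hn0 : n ≠ 0 := by omega
  have hN0 : N ≠ 0 := by omega
  haveI : NeZero N := ⟨hN0⟩
  set e := padicValNat p n with he
  have he1 : 1 ≤ e := one_le_padicValNat_of_dvd (by omega) hpn
  set f := padicValNat p N with hf
  have hfe : f ≤ e := by
    by_contra h
    exact hcon ((pow_dvd_pow p (by omega)).trans pow_padicValNat_dvd)
  rcases Nat.eq_zero_or_pos f with hf0 | hf1
  · -- Case A : p ∤ N
    have hpN : ¬ p ∣ N := by
      intro h
      have := one_le_padicValNat_of_dvd (by omega) h
      omega
    have hu : IsUnit (p : ZMod N) :=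
      (ZMod.isUnit_iff_coprime p N).mpr ((Nat.Prime.coprime_iff_not_dvd hp).mpr hpN)
    have hui : IsUnit ((p : ZMod N)⁻¹) :=
      IsUnit.of_mul_eq_one _ (ZMod.inv_mul_of_unit _ hu)
    obtain ⟨q, hqgt, hqp, hqmod⟩ := Nat.forall_exists_prime_gt_and_eq_mod hui p
    have hmodN : p * q ≡ 1 [MOD N] := by
      rw [← ZMod.natCast_eq_natCast_iff]
      push_cast
      rw [hqmod, ZMod.mul_inv_of_unit _ hu]
    have hint : (1:ℤ) ≡ ((p*q : ℕ) : ℤ) [ZMOD (N:ℤ)] :=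
      (Int.natCast_modEq_iff.mpr hmodN).symm
    have hsq : Squarefree ((p*q : ℕ) : ℤ) := by
      rw [Int.squarefree_natCast, Nat.squarefree_mul
        ((Nat.coprime_primes hp hqp).mpr (by omega))]
      exact ⟨hp.prime.squarefree, hqp.prime.squarefree⟩
    have := hper 1 ((p*q : ℕ) : ℤ) (nthPowerFree_one (by omega))
      (nthPowerFree_of_squarefree (by omega) hsq) hint p hp hpn
    rw [dLocal_one p e hp, dLocal_dvd p e (by push_cast; exact Dvd.intro _ rfl)] at this
    omega
  · -- Case B : 1 ≤ f ≤ e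
    set m := N / p ^ f with hm
    have hNm : p ^ f * m = N := Nat.mul_div_cancel' pow_padicValNat_dvd
    have hm0 : m ≠ 0 := by
      intro h; rw [h, mul_zero] at hNm; omega
    have hpm : ¬ p ∣ m := by
      intro h
      obtain ⟨t, ht⟩ := h
      have hdvd : p ^ (f+1) ∣ N := by
        rw [← hNm, ht, pow_succ]
        exact Dvd.intro t (by ring)
      have := (padicValNat_dvd_iff_le hN0).mp hdvd
      omega
    have hcop : Nat.Coprime (p^(f+1)) m :=
      Nat.Coprime.pow_left _ ((Nat.Prime.coprime_iff_not_dvd hp).mpr hpm)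
    obtain ⟨r, hr1, hr2⟩ := Nat.chineseRemainder hcop (1 + p^f) 1
    set L := p^(f+1) * m with hL
    have hL0 : L ≠ 0 := by
      have := hp.pos
      exact Nat.mul_ne_zero (by positivity) hm0
    haveI : NeZero L := ⟨hL0⟩
    have hpr : ¬ p ∣ (r:ℕ) := by
      intro h
      have h1 : (r:ℕ) ≡ 1 + p^f [MOD p] := hr1.of_dvd (dvd_pow_self p (by omega))
      have h2 : p ∣ 1 + p^f := (Nat.modEq_zero_iff_dvd.mp
        (((Nat.modEq_zero_iff_dvd.mpr h).symm.trans h1).symm))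
      have h3 : p ∣ p ^ f := dvd_pow_self p (by omega)
      have h4 : p ∣ 1 := (Nat.dvd_add_right h3).mp (by rwa [Nat.add_comm] at h2)
      have := hp.two_le
      have := Nat.eq_one_of_dvd_one h4
      omega
    have hrL : Nat.Coprime (r:ℕ) L := by
      apply Nat.Coprime.mul_right
      · exact Nat.Coprime.pow_right _
          (Nat.coprime_comm.mp ((Nat.Prime.coprime_iff_not_dvd hp).mpr hpr))
      · have := hr2.gcd_eq
        simpa [Nat.Coprime] using this
    have hu : IsUnit ((r:ℕ) : ZMod L) := (ZMod.isUnit_iff_coprime _ L).mpr hrL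
    obtain ⟨a', ha'gt, ha'p, ha'mod⟩ := Nat.forall_exists_prime_gt_and_eq_mod hu 1
    have hmodL : a' ≡ (r:ℕ) [MOD L] := (ZMod.natCast_eq_natCast_iff _ _ _).mp ha'mod
    have hmodp : a' ≡ 1 + p^f [MOD p^(f+1)] :=
      (hmodL.of_dvd (Dvd.intro m rfl)).trans (hr1)
    have hintp : ((p:ℤ))^(f+1) ∣ (a' : ℤ) - (1 + (p:ℤ)^f) := by
      have := (Int.natCast_modEq_iff.mpr hmodp).dvd
      push_cast at this ⊢
      have := dvd_neg.mpr this
      convert this using 1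
      · rfl
      ring
    have h1 : (p:ℤ)^f ∣ (a':ℤ) - 1 := by
      have : (a':ℤ) - 1 = ((a':ℤ) - (1 + (p:ℤ)^f)) + (p:ℤ)^f := by ring
      rw [this]
      exact dvd_add ((pow_dvd_pow _ (by omega)).trans hintp) dvd_rfl
    have h2 : ¬ (p:ℤ)^(f+1) ∣ (a':ℤ) - 1 := by
      intro h
      have hpf : (p:ℤ)^(f+1) ∣ (p:ℤ)^f := by
        have : ((p:ℤ))^f = ((a':ℤ) - 1) - ((a':ℤ) - (1 + (p:ℤ)^f)) := by ring
        rw [this]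
        exact dvd_sub h hintp
      have hple : (p:ℤ)^(f+1) ≤ (p:ℤ)^f :=
        Int.le_of_dvd (pow_pos (by exact_mod_cast hp.pos) f) hpf
      have hplt : (p:ℤ)^f < (p:ℤ)^(f+1) :=
        pow_lt_pow_right₀ (by exact_mod_cast hp.one_lt) (by omega)
      omega
    have hr1N : (r:ℕ) ≡ 1 [MOD p^f] := by
      have hbase : 1 + p^f ≡ 1 [MOD p^f] := by
        have : (1 + p^f) % p^f = 1 % p^f := by
          rw [Nat.add_mod, Nat.mod_self]
          simp [Nat.mod_mod_of_dvd]
        exact this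
      exact (hr1.of_dvd (pow_dvd_pow p (by omega))).trans hbase
    have hcop' : Nat.Coprime (p^f) m :=
      Nat.Coprime.pow_left _ ((Nat.Prime.coprime_iff_not_dvd hp).mpr hpm)
    have hrN : (r:ℕ) ≡ 1 [MOD N] := by
      rw [← hNm]
      exact (Nat.modEq_and_modEq_iff_modEq_mul hcop').mp ⟨hr1N, hr2⟩
    have hNdvdL : N ∣ L := by
      rw [← hNm, hL]
      exact Nat.mul_dvd_mul (pow_dvd_pow p (by omega)) dvd_rfl
    have ha'N : a' ≡ 1 [MOD N] := (hmodL.of_dvd hNdvdL).trans hrN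
    have hint : (1:ℤ) ≡ ((a':ℕ) : ℤ) [ZMOD (N:ℤ)] := (Int.natCast_modEq_iff.mpr ha'N).symm
    have hsq : Squarefree ((a' : ℕ) : ℤ) := by
      rw [Int.squarefree_natCast]
      exact ha'p.prime.squarefree
    have := hper 1 ((a':ℕ) : ℤ) (nthPowerFree_one (by omega))
      (nthPowerFree_of_squarefree (by omega) hsq) hint p hp hpn
    rw [dLocal_one p e hp,
      dLocal_val p hp e f hf1 hfe (by exact_mod_cast ha'p.two_le) h1 h2] at this
    omega

/-- Let `n ≥ 3` and let `N ≥ 1` be an integer with the property that for all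
`n`-th-power-free integers `a, a'` with `a ≡ a' (mod N)` one has `d_p(a) = d_p(a')` for
every prime `p` dividing `n`. Then `M(n) = n·rad(n)` divides `N`: `n·rad(n)` is the minimal
period of the local data `(d_p)_{p ∣ n}`. -/
theorem M_dvd_of_period (n : ℕ) (hn : 3 ≤ n) (N : ℕ) (hN : 1 ≤ N)
    (hper : ∀ a a' : ℤ, NthPowerFree n a → NthPowerFree n a' → a ≡ a' [ZMOD (N : ℤ)] →
      ∀ p : ℕ, p.Prime → p ∣ n →
        dLocal p (padicValNat p n) a = dLocal p (padicValNat p n) a') :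
    n * radical n ∣ N := by
  have key := key_pow_dvd n hn N hN hper
  have hn0 : n ≠ 0 := by omega
  have hN0 : N ≠ 0 := by omega
  have hrad0 : radical n ≠ 0 := by
    unfold radical
    exact Finset.prod_ne_zero_iff.mpr fun p hp => (Nat.prime_of_mem_primeFactors hp).pos.ne'
  rw [← Nat.factorization_le_iff_dvd (mul_ne_zero hn0 hrad0) hN0, Finsupp.le_def]
  intro q
  rw [Nat.factorization_mul hn0 hrad0, Finsupp.add_apply]
  by_cases hq : q.Prime
  · by_cases hqn : q ∣ n
    · have e1 : n.factorization q = padicValNat q n := Nat.factorization_def n hq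
      have e2 : (radical n).factorization q = 1 := by
        unfold radical
        rw [Nat.factorization_prod (fun p hp => (Nat.prime_of_mem_primeFactors hp).pos.ne')]
        rw [Finsupp.finset_sum_apply]
        have : ∀ p ∈ n.primeFactors, (Nat.factorization p) q = if p = q then 1 else 0 := by
          intro p hp
          rw [(Nat.prime_of_mem_primeFactors hp).factorization, Finsupp.single_apply]
        rw [Finset.sum_congr rfl this, Finset.sum_ite_eq' n.primeFactors q (fun _ => 1),
          if_pos (Nat.mem_primeFactors.mpr ⟨hq, hqn, hn0⟩)]
      rw [e1, e2]
      exact (Nat.Prime.pow_dvd_iff_le_factorization hq hN0).mp (key q hq hqn)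
    · have hqr : ¬ q ∣ radical n := by
        intro hd
        unfold radical at hd
        obtain ⟨t, ht, hqt⟩ := (Nat.Prime.prime hq).dvd_finset_prod_iff _ |>.mp hd
        have : q = t := ((Nat.prime_dvd_prime_iff_eq hq (Nat.prime_of_mem_primeFactors ht)).mp hqt)
        exact hqn (this ▸ Nat.dvd_of_mem_primeFactors ht)
      rw [Nat.factorization_eq_zero_of_not_dvd hqn, Nat.factorization_eq_zero_of_not_dvd hqr]
      simp
  · simp [Nat.factorization_eq_zero_of_not_prime _ hq]
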